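/- arXiv:2308.13166 — 3 statements merged into one kernel-verified Lean document; each statement's English description precedes it below -/
import Mathlib

section
/- Let Y be a real random variable with |Y| ≤ C almost surely for some C > 0 and mean y := E[Y], and let ε > 0. Let v : ℝ → ℝ be Borel measurable, twice continuously differentiable on [y − ε, y + ε] with |v''(s)| ≤ H_v for all s ∈ [y − ε, y + ε], and with |v(s)| ≤ v̄ for all s ∈ [−C, C]. Then |E[v(Y)] − v(y)| ≤ (H_v/2)·ε² + (2·v̄ + 2·C·|v'(y)|)·P(|Y − y| > ε). -/
open MeasureTheory

/-- One-sided second-order Taylor bound from a Lipschitz estimate on the derivative. -/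
lemma one_sided_quad {y ε H : ℝ} (hε : 0 < ε) {v v' : ℝ → ℝ}
    (hd : ∀ s ∈ Set.Icc (y - ε) (y + ε),
      HasDerivWithinAt v (v' s) (Set.Icc (y - ε) (y + ε)) s)
    (hLip : ∀ s ∈ Set.Icc (y - ε) (y + ε), |v' s - v' y| ≤ H * |s - y|) :
    ∀ s ∈ Set.Icc (y - ε) (y + ε), v s - v y - v' y * (s - y) ≤ H / 2 * (s - y) ^ 2 := by
  intro s hs
  set I := Set.Icc (y - ε) (y + ε) with hI
  have hyI : y ∈ I := ⟨by linarith, by linarith⟩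
  set g : ℝ → ℝ := fun t => H / 2 * (t - y) ^ 2 - (v t - v y - v' y * (t - y)) with hg
  have hgy : g y = 0 := by simp [hg]
  have hcv : ContinuousOn v I := fun t ht => (hd t ht).continuousWithinAt
  have hcg : ContinuousOn g I := by
    apply ContinuousOn.sub
    · exact (continuousOn_const.mul ((continuousOn_id.sub continuousOn_const).pow 2))
    · exact (hcv.sub continuousOn_const).sub
        (continuousOn_const.mul (continuousOn_id.sub continuousOn_const))
  have hintI : Set.Ioo (y - ε) (y + ε) ⊆ I := Set.Ioo_subset_Icc_self
  have hgd : ∀ t ∈ Set.Ioo (y - ε) (y + ε),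
      HasDerivAt g (H * (t - y) - (v' t - v' y)) t := by
    intro t ht
    have hmem : I ∈ nhds t := Icc_mem_nhds ht.1 ht.2
    have hv : HasDerivAt v (v' t) t := (hd t (hintI ht)).hasDerivAt hmem
    have h1 : HasDerivAt (fun t : ℝ => H / 2 * (t - y) ^ 2) (H * (t - y)) t := by
      have := (((hasDerivAt_id t).sub_const y).pow 2).const_mul (H / 2)
      refine this.congr_deriv ?_
      simp only [id_eq]
      ring
    have h2 : HasDerivAt (fun t => v t - v y - v' y * (t - y)) (v' t - v' y) t := by
      have := (hv.sub_const (v y)).sub (((hasDerivAt_id t).sub_const y).const_mul (v' y))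
      refine this.congr_deriv ?_
      ring
    exact h1.sub h2
  rcases le_total y s with hys | hsy
  · -- s ≥ y : g is monotone on [y, y+ε]
    have hsub : Set.Icc y (y + ε) ⊆ I := Set.Icc_subset_Icc (by linarith) le_rfl
    have hsub' : Set.Ioo y (y + ε) ⊆ Set.Ioo (y - ε) (y + ε) :=
      Set.Ioo_subset_Ioo (by linarith) le_rfl
    have hmono : MonotoneOn g (Set.Icc y (y + ε)) := by
      apply monotoneOn_of_deriv_nonneg (convex_Icc _ _) (hcg.mono hsub)
      · intro x hx
        rw [interior_Icc] at hx
        exact ((hgd x (hsub' hx)).differentiableAt).differentiableWithinAt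
      · intro x hx
        rw [interior_Icc] at hx
        rw [(hgd x (hsub' hx)).deriv]
        have hxI := hintI (hsub' hx)
        have := hLip x hxI
        rw [abs_of_nonneg (by linarith [hx.1] : (0:ℝ) ≤ x - y)] at this
        have := abs_le.1 this
        linarith [this.2]
    have := hmono ⟨le_rfl, by linarith⟩ ⟨hys, hs.2⟩ hys
    rw [hgy] at this
    have h2 : 0 ≤ H / 2 * (s - y) ^ 2 - (v s - v y - v' y * (s - y)) := this
    linarith
  · -- s ≤ y : g is antitone on [y-ε, y]
    have hsub : Set.Icc (y - ε) y ⊆ I := Set.Icc_subset_Icc le_rfl (by linarith)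
    have hsub' : Set.Ioo (y - ε) y ⊆ Set.Ioo (y - ε) (y + ε) :=
      Set.Ioo_subset_Ioo le_rfl (by linarith)
    have hanti : AntitoneOn g (Set.Icc (y - ε) y) := by
      apply antitoneOn_of_deriv_nonpos (convex_Icc _ _) (hcg.mono hsub)
      · intro x hx
        rw [interior_Icc] at hx
        exact ((hgd x (hsub' hx)).differentiableAt).differentiableWithinAt
      · intro x hx
        rw [interior_Icc] at hx
        rw [(hgd x (hsub' hx)).deriv]
        have hxI := hintI (hsub' hx)
        have := hLip x hxI
        rw [abs_of_nonpos (by linarith [hx.2] : x - y ≤ (0:ℝ))] at this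
        have := abs_le.1 this
        linarith [this.1]
    have := hanti ⟨hs.1, hsy⟩ ⟨by linarith, le_rfl⟩ hsy
    rw [hgy] at this
    have h2 : 0 ≤ H / 2 * (s - y) ^ 2 - (v s - v y - v' y * (s - y)) := this
    linarith

/-- Two-sided second-order Taylor bound. -/
lemma quad_bound {y ε H : ℝ} (hε : 0 < ε) {v v' v'' : ℝ → ℝ}
    (hd1 : ∀ s ∈ Set.Icc (y - ε) (y + ε),
      HasDerivWithinAt v (v' s) (Set.Icc (y - ε) (y + ε)) s)
    (hd2 : ∀ s ∈ Set.Icc (y - ε) (y + ε),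
      HasDerivWithinAt v' (v'' s) (Set.Icc (y - ε) (y + ε)) s)
    (hH : ∀ s ∈ Set.Icc (y - ε) (y + ε), |v'' s| ≤ H) :
    ∀ s ∈ Set.Icc (y - ε) (y + ε),
      |v s - v y - v' y * (s - y)| ≤ H / 2 * (s - y) ^ 2 := by
  have hyI : y ∈ Set.Icc (y - ε) (y + ε) := ⟨by linarith, by linarith⟩
  have hLip : ∀ s ∈ Set.Icc (y - ε) (y + ε), |v' s - v' y| ≤ H * |s - y| := by
    intro s hs
    have := (convex_Icc (y - ε) (y + ε)).norm_image_sub_le_of_norm_hasDerivWithin_le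
      hd2 (fun x hx => by simpa [Real.norm_eq_abs] using hH x hx) hyI hs
    simpa [Real.norm_eq_abs] using this
  intro s hs
  rw [abs_le]
  constructor
  · have h1 : ∀ t ∈ Set.Icc (y - ε) (y + ε), |(-v' t) - (-v' y)| ≤ H * |t - y| := by
      intro t ht
      have := hLip t ht
      rwa [show (-v' t) - (-v' y) = -(v' t - v' y) by ring, abs_neg]
    have := one_sided_quad hε (v := fun t => -v t) (v' := fun t => -v' t)
      (fun t ht => (hd1 t ht).neg) h1 s hs
    simp only [neg_mul] at this
    linarith [this]
  · exact one_sided_quad hε hd1 hLip s hs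

/-- Version of the main theorem with a measurable `Y`. -/
lemma second_order_truncation_bound_meas
    {Ω : Type*} [MeasurableSpace Ω] (μ : Measure Ω) [IsProbabilityMeasure μ]
    (Y : Ω → ℝ) (hYm : Measurable Y)
    (C : ℝ) (hC : 0 < C) (hbound : ∀ᵐ ω ∂μ, |Y ω| ≤ C)
    (y : ℝ) (hy : y = ∫ ω, Y ω ∂μ)
    (ε : ℝ) (hε : 0 < ε)
    (v v' v'' : ℝ → ℝ) (hv : Measurable v)
    (hderiv1 : ∀ s ∈ Set.Icc (y - ε) (y + ε),
      HasDerivWithinAt v (v' s) (Set.Icc (y - ε) (y + ε)) s)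
    (hderiv2 : ∀ s ∈ Set.Icc (y - ε) (y + ε),
      HasDerivWithinAt v' (v'' s) (Set.Icc (y - ε) (y + ε)) s)
    (H : ℝ) (hH : ∀ s ∈ Set.Icc (y - ε) (y + ε), |v'' s| ≤ H)
    (vbar : ℝ) (hvbd : ∀ s ∈ Set.Icc (-C) C, |v s| ≤ vbar) :
    |(∫ ω, v (Y ω) ∂μ) - v y|
      ≤ H / 2 * ε ^ 2
        + (2 * vbar + 2 * C * |v' y|) * (μ {ω | ε < |Y ω - y|}).toReal := by
  have hH0 : 0 ≤ H := le_trans (abs_nonneg _) (hH y ⟨by linarith, by linarith⟩)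
  set B : Set Ω := {ω | ε < |Y ω - y|} with hBdef
  have hB : MeasurableSet B := measurableSet_lt measurable_const (hYm.sub_const y).abs
  -- |y| ≤ C
  have hyC : |y| ≤ C := by
    have h1 : ‖∫ ω, Y ω ∂μ‖ ≤ C * (μ Set.univ).toReal :=
      norm_integral_le_of_norm_le_const (hbound.mono fun ω h => by simpa [Real.norm_eq_abs] using h)
    rw [hy]
    simpa [Real.norm_eq_abs, measure_univ] using h1
  have hvy : |v y| ≤ vbar := hvbd y (abs_le.1 hyC)
  have hvbar0 : 0 ≤ vbar := le_trans (abs_nonneg _) hvy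
  -- integrability
  have hintY : Integrable Y μ :=
    Integrable.mono' (integrable_const C) hYm.aestronglyMeasurable
      (hbound.mono fun ω h => by simpa [Real.norm_eq_abs] using h)
  have hvY_ae : ∀ᵐ ω ∂μ, |v (Y ω)| ≤ vbar :=
    hbound.mono fun ω h => hvbd (Y ω) (abs_le.1 h)
  have hintvY : Integrable (fun ω => v (Y ω)) μ :=
    Integrable.mono' (integrable_const vbar) (hv.comp hYm).aestronglyMeasurable
      (hvY_ae.mono fun ω h => by simpa [Real.norm_eq_abs] using h)
  have hintYy : Integrable (fun ω => Y ω - y) μ := hintY.sub (integrable_const y)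
  have hintvYy : Integrable (fun ω => v (Y ω) - v y) μ := hintvY.sub (integrable_const (v y))
  have hintf : Integrable (fun ω => v (Y ω) - v y - v' y * (Y ω - y)) μ :=
    hintvYy.sub (hintYy.const_mul (v' y))
  -- ∫ (Y - y) = 0
  have hzero : ∫ ω, (Y ω - y) ∂μ = 0 := by
    rw [integral_sub hintY (integrable_const y), integral_const]
    simp [hy, measure_univ]
  -- splitting
  have hsplit3 : (∫ ω in B, (Y ω - y) ∂μ) + (∫ ω in Bᶜ, (Y ω - y) ∂μ) = 0 := by
    rw [integral_add_compl hB hintYy, hzero]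
  have hsplit1 : (∫ ω, v (Y ω) ∂μ) - v y
      = (∫ ω in B, (v (Y ω) - v y) ∂μ) + (∫ ω in Bᶜ, (v (Y ω) - v y) ∂μ) := by
    rw [integral_add_compl hB hintvYy, integral_sub hintvY (integrable_const (v y)),
      integral_const]
    simp [measure_univ]
  have hsplit2 : (∫ ω in Bᶜ, (v (Y ω) - v y) ∂μ)
      = (∫ ω in Bᶜ, (v (Y ω) - v y - v' y * (Y ω - y)) ∂μ)
        + v' y * (∫ ω in Bᶜ, (Y ω - y) ∂μ) := by
    rw [integral_sub (hintvYy.restrict) ((hintYy.restrict).const_mul (v' y)),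
      integral_const_mul]
    ring
  -- bounds on the three pieces
  have hbd1 : ‖∫ ω in Bᶜ, (v (Y ω) - v y - v' y * (Y ω - y)) ∂μ‖
      ≤ (H / 2 * ε ^ 2) * (μ Bᶜ).toReal := by
    apply norm_setIntegral_le_of_norm_le_const (measure_lt_top _ _)
    · intro ω hω
      have hω' : |Y ω - y| ≤ ε := not_lt.1 hω
      have hmem : Y ω ∈ Set.Icc (y - ε) (y + ε) := by
        rcases abs_le.1 hω' with ⟨h1, h2⟩
        exact ⟨by linarith, by linarith⟩
      have := quad_bound hε hderiv1 hderiv2 hH (Y ω) hmem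
      rw [Real.norm_eq_abs]
      refine this.trans ?_
      have : (Y ω - y) ^ 2 ≤ ε ^ 2 := by
        rw [← sq_abs]
        exact pow_le_pow_left₀ (abs_nonneg _) hω' 2
      nlinarith
  have hbd2 : ‖∫ ω in B, (Y ω - y) ∂μ‖ ≤ (2 * C) * (μ B).toReal := by
    apply norm_setIntegral_le_of_norm_le_const_ae' (measure_lt_top _ _)
    filter_upwards [hbound] with ω h _
    rw [Real.norm_eq_abs]
    calc |Y ω - y| ≤ |Y ω| + |y| := abs_sub _ _
      _ ≤ 2 * C := by linarith
  have hbd3 : ‖∫ ω in B, (v (Y ω) - v y) ∂μ‖ ≤ (2 * vbar) * (μ B).toReal := by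
    apply norm_setIntegral_le_of_norm_le_const_ae' (measure_lt_top _ _)
    filter_upwards [hvY_ae] with ω h _
    rw [Real.norm_eq_abs]
    calc |v (Y ω) - v y| ≤ |v (Y ω)| + |v y| := abs_sub _ _
      _ ≤ 2 * vbar := by linarith
  -- combine
  have hμBc : (μ Bᶜ).toReal ≤ 1 := by
    have : μ Bᶜ ≤ 1 := prob_le_one
    simpa using ENNReal.toReal_mono (by simp) this
  have hμB0 : 0 ≤ (μ B).toReal := ENNReal.toReal_nonneg
  rw [hsplit1, hsplit2]
  have key : ∫ ω in Bᶜ, (Y ω - y) ∂μ = - ∫ ω in B, (Y ω - y) ∂μ := by linarith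
  rw [key]
  have e1 := hbd1
  have e2 := hbd2
  have e3 := hbd3
  rw [Real.norm_eq_abs] at e1 e2 e3
  have habs : |(∫ ω in B, (v (Y ω) - v y) ∂μ)
      + ((∫ ω in Bᶜ, (v (Y ω) - v y - v' y * (Y ω - y)) ∂μ)
        + v' y * -(∫ ω in B, (Y ω - y) ∂μ))|
      ≤ (2 * vbar) * (μ B).toReal + ((H / 2 * ε ^ 2) * (μ Bᶜ).toReal
        + |v' y| * ((2 * C) * (μ B).toReal)) := by
    refine (abs_add_le _ _).trans (add_le_add e3 ((abs_add_le _ _).trans (add_le_add e1 ?_)))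
    rw [abs_mul, abs_neg]
    exact mul_le_mul_of_nonneg_left e2 (abs_nonneg _)
  refine habs.trans ?_
  have hε2 : 0 ≤ H / 2 * ε ^ 2 := by positivity
  have hv'0 : 0 ≤ |v' y| := abs_nonneg _
  nlinarith [mul_le_of_le_one_right hε2 hμBc]

/-- Second-order (C²-smoothness) truncation estimate (Section 5.3): if `|Y| ≤ C` a.s.,
`v` is twice continuously differentiable on `[y - ε, y + ε]` with `|v''| ≤ H` there,
and `|v| ≤ v̄` on `[-C, C]`, then
`|E[v(Y)] - v(y)| ≤ (H/2)·ε² + (2·v̄ + 2·C·|v'(y)|)·P(|Y - y| > ε)`. -/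
theorem second_order_truncation_bound
    {Ω : Type*} [MeasurableSpace Ω] (μ : Measure Ω) [IsProbabilityMeasure μ]
    (Y : Ω → ℝ) (hY : AEMeasurable Y μ)
    (C : ℝ) (hC : 0 < C) (hbound : ∀ᵐ ω ∂μ, |Y ω| ≤ C)
    (y : ℝ) (hy : y = ∫ ω, Y ω ∂μ)
    (ε : ℝ) (hε : 0 < ε)
    (v v' v'' : ℝ → ℝ) (hv : Measurable v)
    (hderiv1 : ∀ s ∈ Set.Icc (y - ε) (y + ε),
      HasDerivWithinAt v (v' s) (Set.Icc (y - ε) (y + ε)) s)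
    (hderiv2 : ∀ s ∈ Set.Icc (y - ε) (y + ε),
      HasDerivWithinAt v' (v'' s) (Set.Icc (y - ε) (y + ε)) s)
    (hcont : ContinuousOn v'' (Set.Icc (y - ε) (y + ε)))
    (H : ℝ) (hH : ∀ s ∈ Set.Icc (y - ε) (y + ε), |v'' s| ≤ H)
    (vbar : ℝ) (hvbd : ∀ s ∈ Set.Icc (-C) C, |v s| ≤ vbar) :
    |(∫ ω, v (Y ω) ∂μ) - v y|
      ≤ H / 2 * ε ^ 2
        + (2 * vbar + 2 * C * |v' y|) * (μ {ω | ε < |Y ω - y|}).toReal := by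
  set Z := hY.mk Y with hZdef
  have hZm : Measurable Z := hY.measurable_mk
  have hZae : Y =ᵐ[μ] Z := hY.ae_eq_mk
  have hbZ : ∀ᵐ ω ∂μ, |Z ω| ≤ C := by
    filter_upwards [hbound, hZae] with ω h1 h2
    rwa [← h2]
  have hyZ : y = ∫ ω, Z ω ∂μ := by
    rw [hy]
    exact integral_congr_ae hZae
  have hIeq : (∫ ω, v (Y ω) ∂μ) = ∫ ω, v (Z ω) ∂μ :=
    integral_congr_ae (hZae.mono fun ω h => by simp only [h])
  have hμeq : μ {ω | ε < |Y ω - y|} = μ {ω | ε < |Z ω - y|} := by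
    apply measure_congr
    filter_upwards [hZae] with ω h
    change (ε < |Y ω - y|) = (ε < |Z ω - y|)
    rw [h]
  rw [hIeq, hμeq]
  exact second_order_truncation_bound_meas μ Z hZm C hC hbZ y hyZ ε hε v v' v'' hv
    hderiv1 hderiv2 H hH vbar hvbd
end

section
/- Let Y be a real random variable with |Y| < C almost surely for some C > 0, mean y := E[Y], and variance σ² := E[(Y − y)²] ∈ (0, ∞). Let ε satisfy 0 < ε < σ²/C, and let v : ℝ → ℝ be Borel measurable, twice continuously differentiable on [y − ε, y + ε] with |v''(s)| ≤ H_v on that interval, and with |v(s)| ≤ v̄ for all s ∈ [−C, C]. Then |E[v(Y)] − v(y)| ≤ (H_v/2)·ε² + (2·v̄ + 2·C·|v'(y)|)·exp(−ε²/(8σ²) + 1/4). -/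
open MeasureTheory Real

lemma exp_quad {x : ℝ} (hx : |x| ≤ 1) : Real.exp x ≤ 1 + x + (3/4) * x ^ 2 := by
  have h := Real.exp_bound hx (n := 2) (by norm_num)
  have hsum : ∑ m ∈ Finset.range 2, x ^ m / (m.factorial : ℝ) = 1 + x := by
    simp [Finset.sum_range_succ]
  rw [hsum] at h
  have h2 : Real.exp x - (1 + x) ≤ |x| ^ 2 * ((3:ℝ) / (2 * 2)) := by
    calc Real.exp x - (1 + x) ≤ |Real.exp x - (1 + x)| := le_abs_self _
    _ ≤ |x| ^ 2 * ((2:ℕ).succ / ((2:ℕ).factorial * (2:ℕ))) := h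
    _ = |x| ^ 2 * ((3:ℝ) / (2 * 2)) := by norm_num
  have : |x| ^ 2 = x ^ 2 := sq_abs x
  nlinarith [sq_nonneg x]

lemma taylor_bound {a b H : ℝ} {v v' v'' : ℝ → ℝ}
    (h1 : ∀ s ∈ Set.Icc a b, HasDerivWithinAt v (v' s) (Set.Icc a b) s)
    (h2 : ∀ s ∈ Set.Icc a b, HasDerivWithinAt v' (v'' s) (Set.Icc a b) s)
    (hH : ∀ s ∈ Set.Icc a b, |v'' s| ≤ H)
    {y s : ℝ} (hy : y ∈ Set.Icc a b) (hs : s ∈ Set.Icc a b) :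
    |v s - v y - v' y * (s - y)| ≤ H / 2 * (s - y) ^ 2 := by
  have hconv : Convex ℝ (Set.Icc a b) := convex_Icc a b
  have lip : ∀ u ∈ Set.Icc a b, ∀ w ∈ Set.Icc a b, |v' u - v' w| ≤ H * |u - w| := by
    intro u hu w hw
    have := Convex.norm_image_sub_le_of_norm_hasDerivWithin_le h2
      (fun x hx => by simpa using hH x hx) hconv hw hu
    simpa [Real.norm_eq_abs] using this
  have v'cont : ContinuousOn v' (Set.Icc a b) := fun x hx => (h2 x hx).continuousWithinAt
  have vcont : ContinuousOn v (Set.Icc a b) := fun x hx => (h1 x hx).continuousWithinAt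
  rcases le_total y s with hys | hsy
  · -- y ≤ s
    have hsub : Set.Icc y s ⊆ Set.Icc a b := Set.Icc_subset_Icc hy.1 hs.2
    have hint : IntervalIntegrable v' volume y s :=
      (v'cont.mono hsub).intervalIntegrable_of_Icc hys
    have ftc : ∫ u in y..s, v' u = v s - v y := by
      apply intervalIntegral.integral_eq_sub_of_hasDeriv_right_of_le hys (vcont.mono hsub)
        (fun x hx => ?_) hint
      have hxm : x ∈ Set.Icc a b := hsub (Set.mem_Icc.mpr ⟨le_of_lt hx.1, le_of_lt hx.2⟩)
      have : HasDerivAt v (v' x) x := by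
        apply (h1 x hxm).hasDerivAt
        exact Icc_mem_nhds (lt_of_le_of_lt hy.1 hx.1) (lt_of_lt_of_le hx.2 hs.2)
      exact this.hasDerivWithinAt
    have key : v s - v y - v' y * (s - y) = ∫ u in y..s, (v' u - v' y) := by
      rw [intervalIntegral.integral_sub hint intervalIntegrable_const,
        intervalIntegral.integral_const, ftc]
      simp [smul_eq_mul]; ring
    rw [key]
    calc |∫ u in y..s, (v' u - v' y)| ≤ ∫ u in y..s, |v' u - v' y| := by
          rw [← Real.norm_eq_abs]
          exact (intervalIntegral.norm_integral_le_integral_norm hys).trans_eq (by simp)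
      _ ≤ ∫ u in y..s, H * (u - y) := by
          apply intervalIntegral.integral_mono_on hys
          · exact ((v'cont.mono hsub).sub continuousOn_const).abs.intervalIntegrable_of_Icc hys
          · exact (Continuous.intervalIntegrable (by continuity) y s)
          · intro u hu
            have := lip u (hsub hu) y hy
            rw [abs_of_nonneg (sub_nonneg.mpr hu.1)] at this; exact this
      _ = H / 2 * (s - y) ^ 2 := by
          rw [intervalIntegral.integral_const_mul,
            intervalIntegral.integral_sub intervalIntegral.intervalIntegrable_id
              intervalIntegrable_const,
            integral_id, intervalIntegral.integral_const]
          simp only [smul_eq_mul]; ring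
  · -- s ≤ y
    have hsub : Set.Icc s y ⊆ Set.Icc a b := Set.Icc_subset_Icc hs.1 hy.2
    have hint : IntervalIntegrable v' volume s y :=
      (v'cont.mono hsub).intervalIntegrable_of_Icc hsy
    have ftc : ∫ u in s..y, v' u = v y - v s := by
      apply intervalIntegral.integral_eq_sub_of_hasDeriv_right_of_le hsy (vcont.mono hsub)
        (fun x hx => ?_) hint
      have hxm : x ∈ Set.Icc a b := hsub (Set.mem_Icc.mpr ⟨le_of_lt hx.1, le_of_lt hx.2⟩)
      have : HasDerivAt v (v' x) x := by
        apply (h1 x hxm).hasDerivAt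
        exact Icc_mem_nhds (lt_of_le_of_lt hs.1 hx.1) (lt_of_lt_of_le hx.2 hy.2)
      exact this.hasDerivWithinAt
    have key : v s - v y - v' y * (s - y) = -∫ u in s..y, (v' u - v' y) := by
      rw [intervalIntegral.integral_sub hint intervalIntegrable_const,
        intervalIntegral.integral_const, ftc]
      simp [smul_eq_mul]; ring
    rw [key, abs_neg]
    calc |∫ u in s..y, (v' u - v' y)| ≤ ∫ u in s..y, |v' u - v' y| := by
          rw [← Real.norm_eq_abs]
          exact (intervalIntegral.norm_integral_le_integral_norm hsy).trans_eq (by simp)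
      _ ≤ ∫ u in s..y, H * (y - u) := by
          apply intervalIntegral.integral_mono_on hsy
          · exact ((v'cont.mono hsub).sub continuousOn_const).abs.intervalIntegrable_of_Icc hsy
          · exact (Continuous.intervalIntegrable (by continuity) s y)
          · intro u hu
            have := lip u (hsub hu) y hy
            rw [abs_of_nonpos (sub_nonpos.mpr hu.2), neg_sub] at this; exact this
      _ = H / 2 * (s - y) ^ 2 := by
          rw [intervalIntegral.integral_const_mul,
            intervalIntegral.integral_sub intervalIntegrable_const
              intervalIntegral.intervalIntegrable_id,
            integral_id, intervalIntegral.integral_const]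
          simp only [smul_eq_mul]; ring

lemma markov_aux {Ω : Type*} [MeasurableSpace Ω] (μ : Measure Ω) [IsProbabilityMeasure μ]
    {g : Ω → ℝ} (hg : Integrable g μ) (hg0 : 0 ≤ᵐ[μ] g) {S : Set Ω} (hS : MeasurableSet S)
    {c : ℝ} (hc : ∀ ω ∈ S, c ≤ g ω) :
    c * (μ S).toReal ≤ ∫ ω, g ω ∂μ := by
  have h1 : ∫ ω in S, (c : ℝ) ∂μ = (μ S).toReal * c := by
    rw [setIntegral_const]; ring_nf; rfl
  calc c * (μ S).toReal = ∫ ω in S, (c : ℝ) ∂μ := by rw [h1]; ring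
    _ ≤ ∫ ω in S, g ω ∂μ := by
        apply setIntegral_mono_on
          (integrableOn_const (measure_ne_top μ S)) hg.integrableOn hS hc
    _ ≤ ∫ ω, g ω ∂μ := setIntegral_le_integral hg hg0

lemma chernoff_side {Ω : Type*} [MeasurableSpace Ω] (μ : Measure Ω) [IsProbabilityMeasure μ]
    {X : Ω → ℝ} (hXm : Measurable X) {C σ2 ε : ℝ} (hC : 0 < C)
    (hXbd : ∀ᵐ ω ∂μ, |X ω| ≤ 2 * C)
    (hmean : (∫ ω, X ω ∂μ) = 0)
    (hvar : (∫ ω, (X ω) ^ 2 ∂μ) = σ2)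
    (hσ2pos : 0 < σ2) (hε : 0 < ε) (hεC : ε * C ≤ σ2) :
    (μ {ω | ε ≤ X ω}).toReal ≤ Real.exp (-(5 * ε ^ 2 / (16 * σ2))) := by
  set t : ℝ := ε / (2 * σ2) with ht_def
  have ht : 0 < t := div_pos hε (by linarith)
  have htX : ∀ᵐ ω ∂μ, |t * X ω| ≤ 1 := by
    filter_upwards [hXbd] with ω hω
    have h1 : |t * X ω| = t * |X ω| := by rw [abs_mul, abs_of_nonneg ht.le]
    have h2 : t * |X ω| ≤ t * (2 * C) := mul_le_mul_of_nonneg_left hω ht.le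
    have h3 : t * (2 * C) ≤ 1 := by
      rw [ht_def, div_mul_eq_mul_div, div_le_one (by linarith)]
      nlinarith
    linarith
  have hXint : Integrable X μ := by
    apply Integrable.mono' (integrable_const (2 * C)) hXm.aestronglyMeasurable
    filter_upwards [hXbd] with ω hω using by rwa [Real.norm_eq_abs]
  have hX2int : Integrable (fun ω => (X ω) ^ 2) μ := by
    apply Integrable.mono' (integrable_const ((2 * C) ^ 2))
      ((hXm.pow_const 2).aestronglyMeasurable)
    filter_upwards [hXbd] with ω hω
    rw [Real.norm_eq_abs, abs_pow]
    exact pow_le_pow_left₀ (abs_nonneg _) hω 2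
  have hexpm : Measurable (fun ω => Real.exp (t * X ω)) :=
    Real.measurable_exp.comp (hXm.const_mul t)
  have hexpint : Integrable (fun ω => Real.exp (t * X ω)) μ := by
    apply Integrable.mono' (integrable_const (Real.exp 1)) hexpm.aestronglyMeasurable
    filter_upwards [htX] with ω hω
    rw [Real.norm_eq_abs, abs_of_nonneg (Real.exp_pos _).le]
    exact Real.exp_le_exp.mpr (le_trans (le_abs_self _) hω)
  have hSmeas : MeasurableSet {ω | ε ≤ X ω} := measurableSet_le measurable_const hXm
  have step1 : Real.exp (t * ε) * (μ {ω | ε ≤ X ω}).toReal ≤ ∫ ω, Real.exp (t * X ω) ∂μ := by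
    apply markov_aux μ hexpint (Filter.Eventually.of_forall fun ω => (Real.exp_pos _).le) hSmeas
    intro ω hω
    exact Real.exp_le_exp.mpr (mul_le_mul_of_nonneg_left hω ht.le)
  have hg2int : Integrable (fun ω => 1 + t * X ω + 3/4 * t ^ 2 * (X ω) ^ 2) μ :=
    ((integrable_const 1).add (hXint.const_mul t)).add (hX2int.const_mul (3/4 * t ^ 2))
  have step2 : ∫ ω, Real.exp (t * X ω) ∂μ ≤ ∫ ω, (1 + t * X ω + 3/4 * t ^ 2 * (X ω) ^ 2) ∂μ := by
    apply integral_mono_ae hexpint hg2int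
    filter_upwards [htX] with ω hω
    calc Real.exp (t * X ω) ≤ 1 + t * X ω + 3/4 * (t * X ω) ^ 2 := exp_quad hω
      _ = 1 + t * X ω + 3/4 * t ^ 2 * (X ω) ^ 2 := by ring
  have step3 : ∫ ω, (1 + t * X ω + 3/4 * t ^ 2 * (X ω) ^ 2) ∂μ = 1 + 3/4 * t ^ 2 * σ2 := by
    have h1 : ∫ ω, (1 + t * X ω + 3/4 * t ^ 2 * (X ω) ^ 2) ∂μ
        = (∫ ω, (1 + t * X ω) ∂μ) + ∫ ω, 3/4 * t ^ 2 * (X ω) ^ 2 ∂μ :=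
      integral_add ((integrable_const 1).add (hXint.const_mul t)) (hX2int.const_mul _)
    have h2 : ∫ ω, (1 + t * X ω) ∂μ = (∫ _, (1:ℝ) ∂μ) + ∫ ω, t * X ω ∂μ :=
      integral_add (integrable_const 1) (hXint.const_mul t)
    rw [h1, h2, integral_const, integral_const_mul, integral_const_mul, hmean, hvar]
    simp
  have step4 : (1 : ℝ) + 3/4 * t ^ 2 * σ2 ≤ Real.exp (3/4 * t ^ 2 * σ2) := by
    have := Real.add_one_le_exp (3/4 * t ^ 2 * σ2); linarith
  have hcomb : (μ {ω | ε ≤ X ω}).toReal ≤ Real.exp (3/4 * t ^ 2 * σ2 - t * ε) := by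
    rw [Real.exp_sub, le_div_iff₀ (Real.exp_pos _)]
    calc (μ {ω | ε ≤ X ω}).toReal * Real.exp (t * ε)
        = Real.exp (t * ε) * (μ {ω | ε ≤ X ω}).toReal := by ring
      _ ≤ Real.exp (3/4 * t ^ 2 * σ2) := le_trans step1 (le_trans step2 (step3 ▸ step4))
  have hexpeq : 3/4 * t ^ 2 * σ2 - t * ε = -(5 * ε ^ 2 / (16 * σ2)) := by
    rw [ht_def]; field_simp; ring
  rwa [hexpeq] at hcomb

lemma tail_bound {Ω : Type*} [MeasurableSpace Ω] (μ : Measure Ω) [IsProbabilityMeasure μ]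
    {X : Ω → ℝ} (hXm : Measurable X) {C σ2 ε : ℝ} (hC : 0 < C)
    (hXbd : ∀ᵐ ω ∂μ, |X ω| ≤ 2 * C)
    (hmean : (∫ ω, X ω ∂μ) = 0)
    (hvar : (∫ ω, (X ω) ^ 2 ∂μ) = σ2)
    (hσ2pos : 0 < σ2) (hε : 0 < ε) (hεC : ε * C ≤ σ2)
    (hX2int : Integrable (fun ω => (X ω) ^ 2) μ) :
    (μ {ω | ε ≤ |X ω|}).toReal ≤ Real.exp (-(ε ^ 2 / (8 * σ2)) + 1/4) := by
  set q : ℝ := ε ^ 2 / σ2 with hq_def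
  have hq : 0 < q := div_pos (by positivity) hσ2pos
  have hεq : ε ^ 2 = q * σ2 := by rw [hq_def, div_mul_cancel₀ _ (ne_of_gt hσ2pos)]
  have hexp : -(ε ^ 2 / (8 * σ2)) + 1/4 = -(q / 8 - 1/4) := by
    rw [hεq]; field_simp; ring
  have hSmeas : MeasurableSet {ω | ε ≤ |X ω|} := measurableSet_le measurable_const hXm.abs
  rcases le_total q 2 with hq2 | hq2
  · -- trivial bound
    have hp1 : (μ {ω | ε ≤ |X ω|}).toReal ≤ 1 := by
      have h : μ {ω | ε ≤ |X ω|} ≤ 1 := prob_le_one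
      simpa using ENNReal.toReal_mono ENNReal.one_ne_top h
    have : (1 : ℝ) ≤ Real.exp (-(q / 8 - 1/4)) := Real.one_le_exp (by linarith)
    rw [hexp]; linarith
  rcases le_total q 4 with hq4 | hq4
  · -- Chebyshev
    have cheb : ε ^ 2 * (μ {ω | ε ≤ |X ω|}).toReal ≤ σ2 := by
      rw [← hvar]
      apply markov_aux μ hX2int (Filter.Eventually.of_forall fun ω => sq_nonneg _) hSmeas
      intro ω hω
      calc ε ^ 2 ≤ |X ω| ^ 2 := by
            apply pow_le_pow_left₀ hε.le hω
        _ = (X ω) ^ 2 := sq_abs _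
      
    have hp : (μ {ω | ε ≤ |X ω|}).toReal ≤ 1 / q := by
      rw [le_div_iff₀ hq, hq_def, ← mul_div_assoc, div_le_one hσ2pos]
      nlinarith
    have hexp14 : Real.exp (1/4) ≤ 2 := by
      have h4 : Real.exp (1/4) ^ 4 = Real.exp 1 := by
        rw [← Real.exp_nat_mul]; norm_num
      have he : Real.exp 1 < 2.7182818286 := Real.exp_one_lt_d9
      have : Real.exp (1/4) ^ 4 ≤ 2 ^ 4 := by rw [h4]; norm_num; linarith
      exact le_of_pow_le_pow_left₀ (by norm_num) (by norm_num) this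
    have he2 : Real.exp (q / 8 - 1/4) ≤ q :=
      calc Real.exp (q / 8 - 1/4) ≤ Real.exp (1/4) := Real.exp_le_exp.mpr (by linarith)
        _ ≤ 2 := hexp14
        _ ≤ q := hq2
    have : 1 / q ≤ Real.exp (-(q / 8 - 1/4)) := by
      rw [Real.exp_neg, ← one_div]
      exact one_div_le_one_div_of_le (Real.exp_pos _) he2
    rw [hexp]; linarith
  · -- Chernoff
    have hsub : {ω | ε ≤ |X ω|} ⊆ {ω | ε ≤ X ω} ∪ {ω | ε ≤ -X ω} := by
      intro ω hω
      have hω' : ε ≤ |X ω| := hω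
      rcases le_abs.mp hω' with h | h
      · exact Or.inl h
      · exact Or.inr h
    have hmeas1 : MeasurableSet {ω | ε ≤ X ω} := measurableSet_le measurable_const hXm
    have hmeas2 : MeasurableSet {ω | ε ≤ -X ω} := measurableSet_le measurable_const hXm.neg
    have hsum : (μ {ω | ε ≤ |X ω|}).toReal
        ≤ (μ {ω | ε ≤ X ω}).toReal + (μ {ω | ε ≤ -X ω}).toReal := by
      have h1 : μ {ω | ε ≤ |X ω|} ≤ μ {ω | ε ≤ X ω} + μ {ω | ε ≤ -X ω} :=
        le_trans (measure_mono hsub) (measure_union_le _ _)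
      have h2 := ENNReal.toReal_mono
        (ENNReal.add_ne_top.mpr ⟨measure_ne_top μ _, measure_ne_top μ _⟩) h1
      rwa [ENNReal.toReal_add (measure_ne_top μ _) (measure_ne_top μ _)] at h2
    have side1 := chernoff_side μ hXm hC hXbd hmean hvar hσ2pos hε hεC
    have side2 : (μ {ω | ε ≤ -X ω}).toReal ≤ Real.exp (-(5 * ε ^ 2 / (16 * σ2))) := by
      apply chernoff_side μ hXm.neg hC _ _ _ hσ2pos hε hεC
      · filter_upwards [hXbd] with ω hω using by simpa using hω
      · rw [show (-X) = fun ω => -X ω from rfl, integral_neg, hmean, neg_zero]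
      · simpa using hvar
    have h2e : (2 : ℝ) ≤ Real.exp (3 * ε ^ 2 / (16 * σ2) + 1/4) := by
      have h1 : (1 : ℝ) + 1 ≤ Real.exp 1 := by linarith [Real.add_one_le_exp 1]
      have h2 : (1 : ℝ) ≤ 3 * ε ^ 2 / (16 * σ2) + 1/4 := by
        rw [hεq, div_add' _ _ _ (by positivity), le_div_iff₀ (by positivity)]
        nlinarith
      linarith [Real.exp_le_exp.mpr h2]
    calc (μ {ω | ε ≤ |X ω|}).toReal
        ≤ 2 * Real.exp (-(5 * ε ^ 2 / (16 * σ2))) := by linarith [Real.exp_pos (-(5 * ε ^ 2 / (16 * σ2)))]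
      _ ≤ Real.exp (3 * ε ^ 2 / (16 * σ2) + 1/4) * Real.exp (-(5 * ε ^ 2 / (16 * σ2))) :=
          mul_le_mul_of_nonneg_right h2e (Real.exp_pos _).le
      _ = Real.exp (-(ε ^ 2 / (8 * σ2)) + 1/4) := by
          rw [← Real.exp_add]; congr 1; field_simp; ring

/-- The paper's displayed second-order bound (equation (45), Section 5.3): combining the
second-order truncation estimate with the Bernstein tail bound, for `0 < ε < σ²/C`,
`|E[v(Y)] - v(y)| ≤ (H/2)·ε² + (2·v̄ + 2·C·|v'(y)|)·exp(-ε²/(8σ²) + 1/4)`. -/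
theorem second_order_bound_with_bernstein
    {Ω : Type*} [MeasurableSpace Ω] (μ : Measure Ω) [IsProbabilityMeasure μ]
    (Y : Ω → ℝ) (hY : AEMeasurable Y μ)
    (C : ℝ) (hC : 0 < C) (hbound : ∀ᵐ ω ∂μ, |Y ω| < C)
    (y : ℝ) (hy : y = ∫ ω, Y ω ∂μ)
    (σ2 : ℝ) (hσ2 : σ2 = ∫ ω, (Y ω - y) ^ 2 ∂μ) (hσ2pos : 0 < σ2)
    (ε : ℝ) (hε : 0 < ε) (hεσ : ε < σ2 / C)
    (v v' v'' : ℝ → ℝ) (hv : Measurable v)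
    (hderiv1 : ∀ s ∈ Set.Icc (y - ε) (y + ε),
      HasDerivWithinAt v (v' s) (Set.Icc (y - ε) (y + ε)) s)
    (hderiv2 : ∀ s ∈ Set.Icc (y - ε) (y + ε),
      HasDerivWithinAt v' (v'' s) (Set.Icc (y - ε) (y + ε)) s)
    (hcont : ContinuousOn v'' (Set.Icc (y - ε) (y + ε)))
    (H : ℝ) (hH : ∀ s ∈ Set.Icc (y - ε) (y + ε), |v'' s| ≤ H)
    (vbar : ℝ) (hvbd : ∀ s ∈ Set.Icc (-C) C, |v s| ≤ vbar) :
    |(∫ ω, v (Y ω) ∂μ) - v y|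
      ≤ H / 2 * ε ^ 2
        + (2 * vbar + 2 * C * |v' y|) * Real.exp (-(ε ^ 2 / (8 * σ2)) + 1 / 4) := by
  classical
  set Z : Ω → ℝ := hY.mk Y with hZdef
  have hZm : Measurable Z := hY.measurable_mk
  have hZae : Y =ᵐ[μ] Z := hY.ae_eq_mk
  have hbZ : ∀ᵐ ω ∂μ, |Z ω| < C := by
    filter_upwards [hbound, hZae] with ω h1 h2 using h2 ▸ h1
  have hyZ : y = ∫ ω, Z ω ∂μ := hy.trans (integral_congr_ae hZae)
  have hσZ : σ2 = ∫ ω, (Z ω - y) ^ 2 ∂μ :=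
    hσ2.trans (integral_congr_ae (hZae.mono fun ω h => by dsimp only; rw [h]))
  have hvYZ : (∫ ω, v (Y ω) ∂μ) = ∫ ω, v (Z ω) ∂μ :=
    integral_congr_ae (hZae.mono fun ω h => by dsimp only; rw [h])
  rw [hvYZ]
  have hZint : Integrable Z μ := by
    apply Integrable.mono' (integrable_const C) hZm.aestronglyMeasurable
    filter_upwards [hbZ] with ω h using by rw [Real.norm_eq_abs]; exact h.le
  have hyC : |y| ≤ C := by
    rw [hyZ, ← Real.norm_eq_abs]
    calc ‖∫ ω, Z ω ∂μ‖ ≤ ∫ ω, ‖Z ω‖ ∂μ := norm_integral_le_integral_norm Z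
      _ ≤ ∫ _, C ∂μ := by
          apply integral_mono_ae hZint.norm (integrable_const C)
          filter_upwards [hbZ] with ω h using by rw [Real.norm_eq_abs]; exact h.le
      _ = C := by simp
  have hXm : Measurable fun ω => Z ω - y := hZm.sub measurable_const
  have hXbd : ∀ᵐ ω ∂μ, |Z ω - y| ≤ 2 * C := by
    filter_upwards [hbZ] with ω h
    have h1 := abs_lt.mp h
    have h2 := abs_le.mp hyC
    exact abs_le.mpr ⟨by linarith, by linarith⟩
  have hXint : Integrable (fun ω => Z ω - y) μ := hZint.sub (integrable_const y)
  have hmean : ∫ ω, (Z ω - y) ∂μ = 0 := by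
    rw [integral_sub hZint (integrable_const y), integral_const]
    simp [← hyZ]
  have hX2int : Integrable (fun ω => (Z ω - y) ^ 2) μ := by
    apply Integrable.mono' (integrable_const ((2 * C) ^ 2))
      ((hXm.pow_const 2).aestronglyMeasurable)
    filter_upwards [hXbd] with ω hω
    rw [Real.norm_eq_abs, abs_pow]
    exact pow_le_pow_left₀ (abs_nonneg _) hω 2
  have hεC : ε * C ≤ σ2 := by
    rw [lt_div_iff₀ hC] at hεσ; linarith
  have htail := tail_bound μ hXm hC hXbd hmean hσZ.symm hσ2pos hε hεC hX2int
  -- the event A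
  set A : Set Ω := {ω | |Z ω - y| < ε} with hA_def
  have hA : MeasurableSet A := measurableSet_lt hXm.abs measurable_const
  have hAc : Aᶜ = {ω | ε ≤ |Z ω - y|} := by
    ext ω; simp [hA_def, not_lt]
  have ptail : (μ Aᶜ).toReal ≤ Real.exp (-(ε ^ 2 / (8 * σ2)) + 1 / 4) := by
    rw [hAc]; exact htail
  have ptail0 : 0 ≤ (μ Aᶜ).toReal := ENNReal.toReal_nonneg
  have pA1 : (μ A).toReal ≤ 1 := by
    have h : μ A ≤ 1 := prob_le_one
    simpa using ENNReal.toReal_mono ENNReal.one_ne_top h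
  -- facts about v
  have hyIcc : y ∈ Set.Icc (y - ε) (y + ε) := ⟨by linarith, by linarith⟩
  have hH0 : 0 ≤ H := le_trans (abs_nonneg _) (hH y hyIcc)
  have hvy : |v y| ≤ vbar := hvbd y ⟨(abs_le.mp hyC).1, (abs_le.mp hyC).2⟩
  have hvbar0 : 0 ≤ vbar := le_trans (abs_nonneg _) hvy
  have hvZint : Integrable (fun ω => v (Z ω)) μ := by
    apply Integrable.mono' (integrable_const vbar) (hv.comp hZm).aestronglyMeasurable
    filter_upwards [hbZ] with ω h
    rw [Real.norm_eq_abs]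
    exact hvbd (Z ω) ⟨(abs_lt.mp h).1.le, (abs_lt.mp h).2.le⟩
  have hfint : Integrable (fun ω => v (Z ω) - v y) μ := hvZint.sub (integrable_const _)
  set T : Ω → ℝ := fun ω => v (Z ω) - v y - v' y * (Z ω - y) with hT_def
  have hTint : Integrable T μ := hfint.sub (hXint.const_mul (v' y))
  -- decomposition
  have e0 : (∫ ω, v (Z ω) ∂μ) - v y = ∫ ω, (v (Z ω) - v y) ∂μ := by
    rw [integral_sub hvZint (integrable_const _), integral_const]; simp
  have e1 : ∫ ω, (v (Z ω) - v y) ∂μ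
      = (∫ ω in A, (v (Z ω) - v y) ∂μ) + ∫ ω in Aᶜ, (v (Z ω) - v y) ∂μ :=
    (integral_add_compl hA hfint).symm
  have e2 : ∫ ω in A, (v (Z ω) - v y) ∂μ
      = (∫ ω in A, T ω ∂μ) + ∫ ω in A, v' y * (Z ω - y) ∂μ := by
    rw [← integral_add hTint.integrableOn ((hXint.const_mul (v' y)).integrableOn)]
    congr 1; funext ω; simp [hT_def]
  have e3 : ∫ ω in A, v' y * (Z ω - y) ∂μ = v' y * ∫ ω in A, (Z ω - y) ∂μ :=
    integral_const_mul _ _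
  have e4 : ∫ ω in A, (Z ω - y) ∂μ = -∫ ω in Aᶜ, (Z ω - y) ∂μ := by
    have h := integral_add_compl hA hXint
    rw [hmean] at h; linarith
  -- bounds
  have b1 : |∫ ω in A, T ω ∂μ| ≤ H / 2 * ε ^ 2 := by
    have hb : ‖∫ ω in A, T ω ∂μ‖ ≤ (H / 2 * ε ^ 2) * (μ A).toReal := by
      apply norm_setIntegral_le_of_norm_le_const_ae' (measure_lt_top μ A) _
      apply Filter.Eventually.of_forall
      intro ω hω
      have hωA : |Z ω - y| < ε := hω
      have hZIcc : Z ω ∈ Set.Icc (y - ε) (y + ε) := by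
        have := abs_lt.mp hωA
        exact ⟨by linarith, by linarith⟩
      have ht := taylor_bound hderiv1 hderiv2 hH hyIcc hZIcc
      rw [Real.norm_eq_abs, hT_def]
      refine le_trans ht ?_
      have hsq : (Z ω - y) ^ 2 ≤ ε ^ 2 := by nlinarith [abs_lt.mp hωA]
      have := mul_le_mul_of_nonneg_left hsq (by linarith : (0:ℝ) ≤ H / 2)
      linarith
    rw [Real.norm_eq_abs] at hb
    have h1 : (H / 2 * ε ^ 2) * (μ A).toReal ≤ (H / 2 * ε ^ 2) * 1 :=
      mul_le_mul_of_nonneg_left pA1 (by positivity)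
    linarith
  have b2 : |∫ ω in Aᶜ, (Z ω - y) ∂μ| ≤ 2 * C * (μ Aᶜ).toReal := by
    rw [← Real.norm_eq_abs]
    apply norm_setIntegral_le_of_norm_le_const_ae' (measure_lt_top μ Aᶜ) _
    filter_upwards [hXbd] with ω h _ using by rwa [Real.norm_eq_abs]
  have b3 : |∫ ω in Aᶜ, (v (Z ω) - v y) ∂μ| ≤ 2 * vbar * (μ Aᶜ).toReal := by
    rw [← Real.norm_eq_abs]
    apply norm_setIntegral_le_of_norm_le_const_ae' (measure_lt_top μ Aᶜ) _
    filter_upwards [hbZ] with ω h _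
    rw [Real.norm_eq_abs]
    have h1 : |v (Z ω)| ≤ vbar := hvbd (Z ω) ⟨(abs_lt.mp h).1.le, (abs_lt.mp h).2.le⟩
    calc |v (Z ω) - v y| ≤ |v (Z ω)| + |v y| := abs_sub _ _
      _ ≤ 2 * vbar := by linarith
  -- combine
  rw [e0, e1, e2, e3, e4]
  have habs : |(∫ ω in A, T ω ∂μ) + v' y * -(∫ ω in Aᶜ, (Z ω - y) ∂μ)
      + ∫ ω in Aᶜ, (v (Z ω) - v y) ∂μ|
      ≤ |∫ ω in A, T ω ∂μ| + |v' y| * |∫ ω in Aᶜ, (Z ω - y) ∂μ|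
        + |∫ ω in Aᶜ, (v (Z ω) - v y) ∂μ| := by
    calc _ ≤ |(∫ ω in A, T ω ∂μ) + v' y * -(∫ ω in Aᶜ, (Z ω - y) ∂μ)|
            + |∫ ω in Aᶜ, (v (Z ω) - v y) ∂μ| := abs_add_le _ _
      _ ≤ _ := by
          have := abs_add_le (∫ ω in A, T ω ∂μ) (v' y * -(∫ ω in Aᶜ, (Z ω - y) ∂μ))
          rw [abs_mul, abs_neg] at this
          linarith
  refine le_trans habs ?_
  have hcoef : |v' y| * |∫ ω in Aᶜ, (Z ω - y) ∂μ| ≤ |v' y| * (2 * C * (μ Aᶜ).toReal) :=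
    mul_le_mul_of_nonneg_left b2 (abs_nonneg _)
  have hfinal : (2 * vbar + 2 * C * |v' y|) * (μ Aᶜ).toReal
      ≤ (2 * vbar + 2 * C * |v' y|) * Real.exp (-(ε ^ 2 / (8 * σ2)) + 1 / 4) := by
    apply mul_le_mul_of_nonneg_left ptail
    positivity
  have expand : |v' y| * (2 * C * (μ Aᶜ).toReal) + 2 * vbar * (μ Aᶜ).toReal
      = (2 * vbar + 2 * C * |v' y|) * (μ Aᶜ).toReal := by ring
  linarith [b1, hcoef, b3, hfinal]
end

section
/- Let z* ∈ ℝᵈ and ε > 0, and let g : ℝᵈ → ℝᵐ be a map each of whose components g_j (1 ≤ j ≤ m) is twice continuously differentiable on the closed ball B̄(z*, ε), with G_j := ‖∇g_j(z*)‖ and with H_j an upper bound for the operator norm of the Hessian of g_j at every point of B̄(z*, ε). Let Z be a Borel measurable random vector in ℝᵈ with Z ∈ B̄(z*, ε) almost surely, and let Ξ be a square-integrable random vector in ℝᵐ. Then E[‖g(Z) + Ξ − g(z*)‖²] ≤ 3·E[‖Ξ‖²] + (3·∑_{j=1}^{m} G_j² + (3/4)·ε²·∑_{j=1}^{m} H_j²)·E[‖Z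 − z*‖²]. -/
open MeasureTheory

/-- Quantitative second-order Taylor bound: if `f` is `C²` on a convex set `s` (of unique
differentiability) on which the derivative is `K`-Lipschitz, then the first-order Taylor
remainder is bounded by `K/2 * ‖z - a‖²`. -/
lemma taylor_second_order_bound {E : Type*} [NormedAddCommGroup E] [NormedSpace ℝ E]
    {s : Set E} (hs : Convex ℝ s) (hus : UniqueDiffOn ℝ s)
    {f : E → ℝ} (hf : ContDiffOn ℝ 2 f s)
    {K : ℝ}
    (hbound : ∀ x ∈ s, ∀ y ∈ s,
      ‖fderivWithin ℝ f s x - fderivWithin ℝ f s y‖ ≤ K * ‖x - y‖)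
    {a z : E} (ha : a ∈ s) (hz : z ∈ s) :
    |f z - f a - fderivWithin ℝ f s a (z - a)| ≤ K / 2 * ‖z - a‖ ^ 2 := by
  rcases eq_or_ne z a with rfl | hza
  · simp
  have hK : 0 ≤ K := by
    have h1 : (0:ℝ) ≤ K * ‖z - a‖ :=
      le_trans (norm_nonneg _) (hbound z hz a ha)
    have h2 : (0:ℝ) < ‖z - a‖ := by
      rw [norm_pos_iff]; exact sub_ne_zero.2 hza
    nlinarith
  set v := z - a with hv
  set φ := fderivWithin ℝ f s with hφdef
  set c : ℝ → E := fun t => a + t • v with hc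
  have hmaps : Set.MapsTo c (Set.Icc (0:ℝ) 1) s := by
    intro t ht
    have h := hs ha hz (by linarith [ht.2] : (0:ℝ) ≤ 1 - t) ht.1 (by ring)
    have hct : c t = (1 - t) • a + t • z := by
      simp only [hc, hv]
      module
    rw [hct]; exact h
  set q' : ℝ → ℝ := fun t => φ (c t) v with hq'def
  have hderiv : ∀ t ∈ Set.Icc (0:ℝ) 1,
      HasDerivWithinAt (fun t => f (c t)) (q' t) (Set.Icc (0:ℝ) 1) t := by
    intro t ht
    have hct : c t ∈ s := hmaps ht
    have hdf : HasFDerivWithinAt f (φ (c t)) s (c t) :=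
      ((hf.differentiableOn (by norm_num)) (c t) hct).hasFDerivWithinAt
    have hdc : HasDerivWithinAt c v (Set.Icc (0:ℝ) 1) t := by
      have h1 : HasDerivAt c v t := by
        simpa [hc] using ((hasDerivAt_id t).smul_const v).const_add a
      exact h1.hasDerivWithinAt
    exact hdf.comp_hasDerivWithinAt t hdc hmaps
  have hφcont : ContinuousOn φ s :=
    (hf.fderivWithin (m := 1) hus (by norm_num)).continuousOn
  have hccont : Continuous c := by fun_prop
  have hq'cont : ContinuousOn q' (Set.Icc (0:ℝ) 1) := by
    have h1 : ContinuousOn (fun x => φ x v) s := hφcont.clm_apply continuousOn_const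
    exact h1.comp hccont.continuousOn hmaps
  have hint : IntervalIntegrable q' MeasureTheory.volume 0 1 := by
    apply ContinuousOn.intervalIntegrable
    rwa [Set.uIcc_of_le zero_le_one]
  have hqcont : ContinuousOn (fun t => f (c t)) (Set.Icc (0:ℝ) 1) :=
    fun t ht => (hderiv t ht).continuousWithinAt
  have hFTC : ∫ t in (0:ℝ)..1, q' t = f (c 1) - f (c 0) := by
    apply intervalIntegral.integral_eq_sub_of_hasDeriv_right_of_le zero_le_one hqcont ?_ hint
    intro t ht
    exact (((hderiv t (Set.mem_Icc_of_Ioo ht)).hasDerivAt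
      (Icc_mem_nhds ht.1 ht.2)).hasDerivWithinAt)
  have hc0 : c 0 = a := by simp [hc]
  have hc1 : c 1 = z := by simp [hc, hv]
  have hq'0 : q' 0 = φ a v := by simp [hq'def, hc0]
  have hsub : ∫ t in (0:ℝ)..1, (q' t - q' 0) = f z - f a - φ a v := by
    rw [intervalIntegral.integral_sub hint intervalIntegrable_const, hFTC,
      intervalIntegral.integral_const]
    rw [hc0, hc1, hq'0]
    simp
  have hptbd : ∀ t ∈ Set.uIoc (0:ℝ) 1, ‖q' t - q' 0‖ ≤ K * ‖v‖ ^ 2 * t := by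
    intro t ht
    rw [Set.uIoc_of_le zero_le_one] at ht
    have ht' : t ∈ Set.Icc (0:ℝ) 1 := ⟨le_of_lt ht.1, ht.2⟩
    have h1 : q' t - q' 0 = (φ (c t) - φ (c 0)) v := by
      simp [hq'def, ContinuousLinearMap.sub_apply]
    rw [h1, Real.norm_eq_abs]
    calc |(φ (c t) - φ (c 0)) v| ≤ ‖φ (c t) - φ (c 0)‖ * ‖v‖ :=
          (φ (c t) - φ (c 0)).le_opNorm v
      _ ≤ (K * ‖c t - c 0‖) * ‖v‖ := by
          have := hbound (c t) (hmaps ht') (c 0) (hmaps (Set.left_mem_Icc.2 zero_le_one))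
          have h2 : (0:ℝ) ≤ ‖v‖ := norm_nonneg _
          nlinarith
      _ = K * ‖v‖ ^ 2 * t := by
          have : c t - c 0 = t • v := by simp [hc]
          rw [this, norm_smul, Real.norm_eq_abs, abs_of_nonneg ht'.1]
          ring
  have hgint : IntervalIntegrable (fun t => K * ‖v‖ ^ 2 * t) MeasureTheory.volume 0 1 := by
    apply Continuous.intervalIntegrable
    fun_prop
  have hmain : ‖∫ t in (0:ℝ)..1, (q' t - q' 0)‖ ≤ |∫ t in (0:ℝ)..1, K * ‖v‖ ^ 2 * t| := by
    apply intervalIntegral.norm_integral_le_abs_of_norm_le _ hgint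
    filter_upwards [MeasureTheory.ae_restrict_mem measurableSet_uIoc] with t ht
    exact hptbd t ht
  have hgval : ∫ t in (0:ℝ)..1, K * ‖v‖ ^ 2 * t = K * ‖v‖ ^ 2 / 2 := by
    rw [intervalIntegral.integral_const_mul, integral_id]
    ring
  rw [hsub] at hmain
  rw [hgval] at hmain
  have habs : |K * ‖v‖ ^ 2 / 2| = K / 2 * ‖v‖ ^ 2 := by
    rw [abs_of_nonneg (by positivity)]
    ring
  rw [habs, Real.norm_eq_abs] at hmain
  exact hmain

set_option maxHeartbeats 1000000 in
/-- One-step second-moment propagation estimate (Step One of the proof of Theorem 4): for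
`g : ℝᵈ → ℝᵐ` with components `g_j` that are C² on the closed ball `B̄(z*, ε)`, with
`G j = ‖∇g_j(z*)‖` and `H j` an upper bound for the operator norm of the Hessian of `g_j`
on the ball, a random vector `Z` in the ball a.s. and a square-integrable noise `Ξ`,
`E[‖g(Z) + Ξ - g(z*)‖²] ≤ 3·E[‖Ξ‖²] + (3·∑ G j² + (3/4)·ε²·∑ H j²)·E[‖Z - z*‖²]`. -/
theorem second_moment_propagation
    {Ω : Type*} [MeasurableSpace Ω] (μ : Measure Ω) [IsProbabilityMeasure μ]
    (d m : ℕ)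
    (zstar : EuclideanSpace ℝ (Fin d)) (ε : ℝ) (hε : 0 < ε)
    (g : EuclideanSpace ℝ (Fin d) → EuclideanSpace ℝ (Fin m))
    (hg : ∀ j : Fin m, ContDiffOn ℝ 2 (fun z => g z j) (Metric.closedBall zstar ε))
    (G H : Fin m → ℝ)
    (hG : ∀ j : Fin m, G j = ‖gradient (fun z => g z j) zstar‖)
    (hH : ∀ j : Fin m, ∀ x ∈ Metric.closedBall zstar ε,
      ‖iteratedFDerivWithin ℝ 2 (fun z => g z j) (Metric.closedBall zstar ε) x‖ ≤ H j)
    (Z : Ω → EuclideanSpace ℝ (Fin d)) (hZ : Measurable Z)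
    (hZball : ∀ᵐ ω ∂μ, Z ω ∈ Metric.closedBall zstar ε)
    (Ξ : Ω → EuclideanSpace ℝ (Fin m)) (hΞ : Measurable Ξ)
    (hΞsq : Integrable (fun ω => ‖Ξ ω‖ ^ 2) μ)
    (hgZ : AEStronglyMeasurable (fun ω => g (Z ω)) μ) :
    ∫ ω, ‖g (Z ω) + Ξ ω - g zstar‖ ^ 2 ∂μ
      ≤ 3 * ∫ ω, ‖Ξ ω‖ ^ 2 ∂μ
        + (3 * ∑ j, (G j) ^ 2 + 3 / 4 * ε ^ 2 * ∑ j, (H j) ^ 2)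
          * ∫ ω, ‖Z ω - zstar‖ ^ 2 ∂μ := by
  set s : Set (EuclideanSpace ℝ (Fin d)) := Metric.closedBall zstar ε with hsdef
  have hsconv : Convex ℝ s := convex_closedBall zstar ε
  have hsnhds : s ∈ nhds zstar := Metric.closedBall_mem_nhds zstar hε
  have hus : UniqueDiffOn ℝ s := by
    apply uniqueDiffOn_convex hsconv
    exact ⟨zstar, mem_interior_iff_mem_nhds.2 hsnhds⟩
  have hzstar : zstar ∈ s := Metric.mem_closedBall_self hε.le
  have hHnn : ∀ j, 0 ≤ H j := fun j => le_trans (norm_nonneg _) (hH j zstar hzstar)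
  have hGnn : ∀ j, 0 ≤ G j := fun j => (hG j).symm ▸ norm_nonneg _
  -- norm squared in Euclidean space
  have hnormsq : ∀ (k : ℕ) (v : EuclideanSpace ℝ (Fin k)), ‖v‖ ^ 2 = ∑ j, (v j) ^ 2 := by
    intro k v
    rw [PiLp.norm_sq_eq_of_L2]
    simp [Real.norm_eq_abs, sq_abs]
  -- the derivative within at zstar equals the full derivative, with norm G j
  have hfdnorm : ∀ j, ‖fderivWithin ℝ (fun z => g z j) s zstar‖ = G j := by
    intro j
    have hdiff : DifferentiableAt ℝ (fun z => g z j) zstar :=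
      (((hg j).contDiffAt hsnhds).differentiableAt (by norm_num))
    rw [fderivWithin_of_mem_nhds hsnhds, hG j]
    unfold gradient
    rw [LinearIsometryEquiv.norm_map]
  -- Lipschitz bound for the within-derivative of each component
  have hlip : ∀ j, ∀ x ∈ s, ∀ y ∈ s,
      ‖fderivWithin ℝ (fun z => g z j) s x - fderivWithin ℝ (fun z => g z j) s y‖
        ≤ H j * ‖x - y‖ := by
    intro j x hx y hy
    have hdiff : DifferentiableOn ℝ (fderivWithin ℝ (fun z => g z j) s) s :=
      ((hg j).fderivWithin (m := 1) hus (by norm_num)).differentiableOn (by norm_num)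
    have hbd : ∀ w ∈ s, ‖fderivWithin ℝ (fderivWithin ℝ (fun z => g z j) s) s w‖ ≤ H j := by
      intro w hw
      refine ContinuousLinearMap.opNorm_le_bound _ (hHnn j) fun u => ?_
      refine ContinuousLinearMap.opNorm_le_bound _ (mul_nonneg (hHnn j) (norm_nonneg u)) fun x' => ?_
      have heq : fderivWithin ℝ (fderivWithin ℝ (fun z => g z j) s) s w u x'
          = iteratedFDerivWithin ℝ 2 (fun z => g z j) s w ![u, x'] := by
        rw [iteratedFDerivWithin_two_apply _ hus hw]
        simp
      rw [heq]
      calc ‖iteratedFDerivWithin ℝ 2 (fun z => g z j) s w ![u, x']‖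
          ≤ ‖iteratedFDerivWithin ℝ 2 (fun z => g z j) s w‖ * ∏ i, ‖(![u, x']) i‖ :=
            (iteratedFDerivWithin ℝ 2 (fun z => g z j) s w).le_opNorm _
        _ = ‖iteratedFDerivWithin ℝ 2 (fun z => g z j) s w‖ * (‖u‖ * ‖x'‖) := by
            rw [Fin.prod_univ_two]; simp
        _ ≤ H j * (‖u‖ * ‖x'‖) :=
            mul_le_mul_of_nonneg_right (hH j w hw)
              (mul_nonneg (norm_nonneg _) (norm_nonneg _))
        _ = H j * ‖u‖ * ‖x'‖ := by ring
    exact hsconv.norm_image_sub_le_of_norm_fderivWithin_le hdiff hbd hy hx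
  -- key pointwise bound
  set C : ℝ := 3 * ∑ j, (G j) ^ 2 + 3 / 4 * ε ^ 2 * ∑ j, (H j) ^ 2 with hCdef
  have hpt : ∀ z ∈ s, ∀ ξ : EuclideanSpace ℝ (Fin m),
      ‖g z + ξ - g zstar‖ ^ 2 ≤ 3 * ‖ξ‖ ^ 2 + C * ‖z - zstar‖ ^ 2 := by
    intro z hzs ξ
    set L : EuclideanSpace ℝ (Fin m) :=
      (WithLp.equiv 2 _).symm
        (fun j => fderivWithin ℝ (fun y => g y j) s zstar (z - zstar)) with hLdef
    set R : EuclideanSpace ℝ (Fin m) :=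
      (WithLp.equiv 2 _).symm
        (fun j => g z j - g zstar j
          - fderivWithin ℝ (fun y => g y j) s zstar (z - zstar)) with hRdef
    have hLapp : ∀ j, L j = fderivWithin ℝ (fun y => g y j) s zstar (z - zstar) := fun j => rfl
    have hRapp : ∀ j, R j = g z j - g zstar j
        - fderivWithin ℝ (fun y => g y j) s zstar (z - zstar) := fun j => rfl
    have hdecomp : g z + ξ - g zstar = ξ + (L + R) := by
      apply PiLp.ext
      intro j
      simp only [PiLp.add_apply, PiLp.sub_apply, hLapp, hRapp]
      ring
    have hL2 : ‖L‖ ^ 2 ≤ (∑ j, (G j) ^ 2) * ‖z - zstar‖ ^ 2 := by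
      rw [hnormsq m L]
      rw [Finset.sum_mul]
      apply Finset.sum_le_sum
      intro j _
      rw [hLapp]
      have h1 : |fderivWithin ℝ (fun y => g y j) s zstar (z - zstar)|
          ≤ G j * ‖z - zstar‖ := by
        calc |fderivWithin ℝ (fun y => g y j) s zstar (z - zstar)|
            ≤ ‖fderivWithin ℝ (fun y => g y j) s zstar‖ * ‖z - zstar‖ :=
              (fderivWithin ℝ (fun y => g y j) s zstar).le_opNorm _
          _ = G j * ‖z - zstar‖ := by rw [hfdnorm j]
      calc (fderivWithin ℝ (fun y => g y j) s zstar (z - zstar)) ^ 2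
          = |fderivWithin ℝ (fun y => g y j) s zstar (z - zstar)| ^ 2 := (sq_abs _).symm
        _ ≤ (G j * ‖z - zstar‖) ^ 2 := by
            apply sq_le_sq'
            · linarith [abs_nonneg (fderivWithin ℝ (fun y => g y j) s zstar (z - zstar)), h1]
            · exact h1
        _ = (G j) ^ 2 * ‖z - zstar‖ ^ 2 := by ring
    have hR2 : ‖R‖ ^ 2 ≤ (1 / 4 * ε ^ 2 * ∑ j, (H j) ^ 2) * ‖z - zstar‖ ^ 2 := by
      have hzball : ‖z - zstar‖ ≤ ε := by
        rw [← dist_eq_norm]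
        exact Metric.mem_closedBall.1 hzs
      have hRj : ∀ j, (R j) ^ 2 ≤ (H j) ^ 2 / 4 * ε ^ 2 * ‖z - zstar‖ ^ 2 := by
        intro j
        have h1 := taylor_second_order_bound hsconv hus (hg j) (hlip j) hzstar hzs
        rw [hRapp]
        have h2 : |g z j - g zstar j
            - fderivWithin ℝ (fun y => g y j) s zstar (z - zstar)|
            ≤ H j / 2 * ‖z - zstar‖ ^ 2 := h1
        have h3 : (g z j - g zstar j
            - fderivWithin ℝ (fun y => g y j) s zstar (z - zstar)) ^ 2
            ≤ (H j / 2 * ‖z - zstar‖ ^ 2) ^ 2 := by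
          rw [← sq_abs]
          apply sq_le_sq'
          · linarith [abs_nonneg (g z j - g zstar j
              - fderivWithin ℝ (fun y => g y j) s zstar (z - zstar)), h2]
          · exact h2
        have h4 : (H j / 2 * ‖z - zstar‖ ^ 2) ^ 2
            ≤ (H j) ^ 2 / 4 * ε ^ 2 * ‖z - zstar‖ ^ 2 := by
          have h5 : ‖z - zstar‖ ^ 2 ≤ ε ^ 2 := by
            apply sq_le_sq' _ hzball
            linarith [norm_nonneg (z - zstar)]
          have h7 : (0:ℝ) ≤ (H j) ^ 2 / 4 * ‖z - zstar‖ ^ 2 := by positivity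
          have h8 := mul_le_mul_of_nonneg_left h5 h7
          calc (H j / 2 * ‖z - zstar‖ ^ 2) ^ 2
              = (H j) ^ 2 / 4 * ‖z - zstar‖ ^ 2 * ‖z - zstar‖ ^ 2 := by ring
            _ ≤ (H j) ^ 2 / 4 * ε ^ 2 * ‖z - zstar‖ ^ 2 := by linarith [h8]
        linarith
      rw [hnormsq m R]
      calc ∑ j, (R j) ^ 2 ≤ ∑ j, (H j) ^ 2 / 4 * ε ^ 2 * ‖z - zstar‖ ^ 2 :=
            Finset.sum_le_sum fun j _ => hRj j
        _ = (1 / 4 * ε ^ 2 * ‖z - zstar‖ ^ 2) * ∑ j, (H j) ^ 2 := by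
            rw [Finset.mul_sum]
            exact Finset.sum_congr rfl fun j _ => by ring
        _ = (1 / 4 * ε ^ 2 * ∑ j, (H j) ^ 2) * ‖z - zstar‖ ^ 2 := by ring
    have htri : ‖g z + ξ - g zstar‖ ≤ ‖ξ‖ + ‖L‖ + ‖R‖ := by
      rw [hdecomp]
      calc ‖ξ + (L + R)‖ ≤ ‖ξ‖ + ‖L + R‖ := norm_add_le _ _
        _ ≤ ‖ξ‖ + (‖L‖ + ‖R‖) := by linarith [norm_add_le L R]
        _ = ‖ξ‖ + ‖L‖ + ‖R‖ := by ring
    have hsq : ‖g z + ξ - g zstar‖ ^ 2 ≤ 3 * (‖ξ‖ ^ 2 + ‖L‖ ^ 2 + ‖R‖ ^ 2) := by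
      have h9 : ‖g z + ξ - g zstar‖ ^ 2 ≤ (‖ξ‖ + ‖L‖ + ‖R‖) ^ 2 := by
        apply sq_le_sq' _ htri
        linarith [norm_nonneg (g z + ξ - g zstar), norm_nonneg ξ, norm_nonneg L, norm_nonneg R]
      nlinarith [sq_nonneg (‖ξ‖ - ‖L‖), sq_nonneg (‖ξ‖ - ‖R‖), sq_nonneg (‖L‖ - ‖R‖)]
    rw [hCdef]
    linarith [hL2, hR2, hsq]
  -- integrability
  have hZsm : AEStronglyMeasurable (fun ω => ‖Z ω - zstar‖ ^ 2) μ :=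
    (((hZ.sub measurable_const).norm).pow_const 2).aestronglyMeasurable
  have hZsq : Integrable (fun ω => ‖Z ω - zstar‖ ^ 2) μ := by
    apply Integrable.mono' (integrable_const (ε ^ 2)) hZsm
    filter_upwards [hZball] with ω hω
    have h1 : ‖Z ω - zstar‖ ≤ ε := by
      rw [← dist_eq_norm]; exact Metric.mem_closedBall.1 hω
    rw [Real.norm_eq_abs, abs_of_nonneg (by positivity)]
    nlinarith [norm_nonneg (Z ω - zstar)]
  have hLHSsm : AEStronglyMeasurable (fun ω => ‖g (Z ω) + Ξ ω - g zstar‖ ^ 2) μ := by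
    have h1 : AEStronglyMeasurable (fun ω => g (Z ω) + Ξ ω - g zstar) μ :=
      (hgZ.add hΞ.aestronglyMeasurable).sub aestronglyMeasurable_const
    have h2 := h1.norm
    simp only [pow_two]
    exact h2.mul h2
  have hmaj : Integrable (fun ω => 3 * ‖Ξ ω‖ ^ 2 + C * ‖Z ω - zstar‖ ^ 2) μ :=
    (hΞsq.const_mul 3).add (hZsq.const_mul C)
  have hLHSint : Integrable (fun ω => ‖g (Z ω) + Ξ ω - g zstar‖ ^ 2) μ := by
    apply Integrable.mono' hmaj hLHSsm
    filter_upwards [hZball] with ω hω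
    rw [Real.norm_eq_abs, abs_of_nonneg (by positivity)]
    exact hpt (Z ω) hω (Ξ ω)
  have hmono : ∫ ω, ‖g (Z ω) + Ξ ω - g zstar‖ ^ 2 ∂μ
      ≤ ∫ ω, (3 * ‖Ξ ω‖ ^ 2 + C * ‖Z ω - zstar‖ ^ 2) ∂μ := by
    apply integral_mono_ae hLHSint hmaj
    filter_upwards [hZball] with ω hω
    exact hpt (Z ω) hω (Ξ ω)
  calc ∫ ω, ‖g (Z ω) + Ξ ω - g zstar‖ ^ 2 ∂μ
      ≤ ∫ ω, (3 * ‖Ξ ω‖ ^ 2 + C * ‖Z ω - zstar‖ ^ 2) ∂μ := hmono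
    _ = 3 * ∫ ω, ‖Ξ ω‖ ^ 2 ∂μ + C * ∫ ω, ‖Z ω - zstar‖ ^ 2 ∂μ := by
        rw [integral_add (hΞsq.const_mul 3) (hZsq.const_mul C),
          MeasureTheory.integral_const_mul, MeasureTheory.integral_const_mul]
    _ = 3 * ∫ ω, ‖Ξ ω‖ ^ 2 ∂μ
        + (3 * ∑ j, (G j) ^ 2 + 3 / 4 * ε ^ 2 * ∑ j, (H j) ^ 2)
          * ∫ ω, ‖Z ω - zstar‖ ^ 2 ∂μ := by rw [hCdef]
end
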